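/- Let A and B be quasi-categories and f : A → B a simplicial map. Then f is a categorical equivalence (isomorphism in sSet^{τ₀}) if and only if f is a weak categorical equivalence, i.e., the induced map τ₀(X^B) → τ₀(X^A) is a bijection for every simplicial set X... in particular every categorical equivalence between arbitrary simplicial sets is a weak categorical equivalence. -/

import Mathlib

open CategoryTheory Simplicial SSet MonoidalCategory Opposite

universe u

def SSet.Vert (X : SSet.{u}) : Type u := X _⦋0⦌

instance SSet.vertQuiver (X : SSet.{u}) : Quiver (SSet.Vert X) :=
  ⟨fun x y => { e : X _⦋1⦌ // X.δ 1 e = x ∧ X.δ 0 e = y }⟩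

inductive SSet.FundRel (X : SSet.{u}) : HomRel (Paths (SSet.Vert X)) where
  | degen (x : SSet.Vert X) (e : x ⟶ x) (he : (e.1 : X _⦋1⦌) = X.σ 0 x) :
      SSet.FundRel X e.toPath (𝟙 ((Paths.of _).obj x))
  /-- The relation coming from a 2-simplex. -/
  | comp (x y z : SSet.Vert X) (e : x ⟶ y) (f : y ⟶ z) (g : x ⟶ z)
      (s : X _⦋2⦌) (h₂ : X.δ 2 s = e.1) (h₀ : X.δ 0 s = f.1) (h₁ : X.δ 1 s = g.1) :
      SSet.FundRel X (e.toPath ≫ f.toPath) g.toPath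

def SSet.FundCat (X : SSet.{u}) : Type u := CategoryTheory.Quotient (SSet.FundRel X)

noncomputable instance (X : SSet.{u}) : Category.{u} (SSet.FundCat X) :=
  inferInstanceAs (Category (CategoryTheory.Quotient (SSet.FundRel X)))

def SSet.tau0 (X : SSet.{u}) : Type u :=
  Quotient (CategoryTheory.isIsomorphicSetoid (SSet.FundCat X))

/-- The image of an edge under a map of simplicial sets, as an edge between the
image vertices. -/
noncomputable def SSet.edgeImage {S T : SSet.{u}} (h : S ⟶ T) {x y : SSet.Vert S}
    (e : x ⟶ y) :
    (show SSet.Vert T from h.app (op (SimplexCategory.mk 0)) x) ⟶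
      (show SSet.Vert T from h.app (op (SimplexCategory.mk 0)) y) :=
  ⟨h.app (op (SimplexCategory.mk 1)) e.1,
    (NatTrans.naturality_apply h (SimplexCategory.δ (1 : Fin 2)).op e.1).symm.trans
      (congrArg (h.app (op (SimplexCategory.mk 0))) e.2.1),
    (NatTrans.naturality_apply h (SimplexCategory.δ (0 : Fin 2)).op e.1).symm.trans
      (congrArg (h.app (op (SimplexCategory.mk 0))) e.2.2)⟩

/-- The prefunctor on quivers of vertices and edges induced by a map of
simplicial sets. -/
noncomputable def SSet.vertPrefunctor {S T : SSet.{u}} (h : S ⟶ T) :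
    SSet.Vert S ⥤q SSet.Vert T where
  obj x := h.app (op (SimplexCategory.mk 0)) x
  map e := SSet.edgeImage h e

/-- The functor on path categories induced by a map of simplicial sets. -/
noncomputable def SSet.pathsFunctor {S T : SSet.{u}} (h : S ⟶ T) :
    Paths (SSet.Vert S) ⥤ Paths (SSet.Vert T) where
  obj x := (SSet.vertPrefunctor h).obj x
  map p := (SSet.vertPrefunctor h).mapPath p
  map_id _ := rfl
  map_comp p q := (SSet.vertPrefunctor h).mapPath_comp p q

/-- The functor `τ(S) ⥤ τ(T)` induced by a map of simplicial sets. -/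
noncomputable def SSet.mapFund {S T : SSet.{u}} (h : S ⟶ T) :
    SSet.FundCat S ⥤ SSet.FundCat T := by
  refine CategoryTheory.Quotient.lift _
    (SSet.pathsFunctor h ⋙ CategoryTheory.Quotient.functor (SSet.FundRel T)) ?_
  rintro x y f g (⟨x, e, he⟩ | ⟨x, y, z, e, f', g', s, h₂, h₀, h₁⟩)
  · refine (CategoryTheory.Quotient.sound _
      (SSet.FundRel.degen _ (SSet.edgeImage h e) ?_)).trans
        (CategoryTheory.Functor.map_id _ _)
    show h.app (op (SimplexCategory.mk 1)) e.1 = T.σ 0 _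
    rw [he]
    exact NatTrans.naturality_apply h (SimplexCategory.σ (0 : Fin 1)).op x
  · exact CategoryTheory.Quotient.sound _
      (SSet.FundRel.comp _ _ _ (SSet.edgeImage h e) (SSet.edgeImage h f')
        (SSet.edgeImage h g') (h.app (op (SimplexCategory.mk 2)) s)
        ((NatTrans.naturality_apply h (SimplexCategory.δ (2 : Fin 3)).op s).symm.trans
          (congrArg (h.app (op (SimplexCategory.mk 1))) h₂))
        ((NatTrans.naturality_apply h (SimplexCategory.δ (0 : Fin 3)).op s).symm.trans
          (congrArg (h.app (op (SimplexCategory.mk 1))) h₀))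
        ((NatTrans.naturality_apply h (SimplexCategory.δ (1 : Fin 3)).op s).symm.trans
          (congrArg (h.app (op (SimplexCategory.mk 1))) h₁)))

/-- The induced map `τ₀(S) → τ₀(T)`. -/
noncomputable def SSet.tau0Map {S T : SSet.{u}} (h : S ⟶ T) :
    SSet.tau0 S → SSet.tau0 T :=
  Quotient.map (SSet.mapFund h).obj
    (fun _ _ r => by obtain ⟨i⟩ := r; exact ⟨(SSet.mapFund h).mapIso i⟩)

/-- The object of the fundamental category `τ(X)` determined by a vertex. -/
def SSet.tauObj (X : SSet.{u}) (v : X _⦋0⦌) : SSet.FundCat X :=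
  ⟨(v : Paths (SSet.Vert X))⟩

open MonoidalCategory in
/-- The internal hom simplicial set `B^A`: its `n`-simplices are the maps
`Δⁿ ⊗ A ⟶ B`. -/
@[simps]
noncomputable def SSet.sHom (A B : SSet.{u}) : SSet.{u} where
  obj n := SSet.stdSimplex.obj n.unop ⊗ A ⟶ B
  map f := TypeCat.ofHom (fun g => (SSet.stdSimplex.map f.unop ▷ A) ≫ g)
  map_id n := by apply ConcreteCategory.hom_ext; intro g; erw [CategoryTheory.Functor.map_id]; simp
  map_comp f g := by apply ConcreteCategory.hom_ext; intro h; erw [CategoryTheory.Functor.map_comp]; simp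

/-- The vertex of the internal hom `B^A` corresponding to a map `A ⟶ B`. -/
noncomputable def SSet.vertexOf {A B : SSet.{u}} (f : A ⟶ B) :
    (SSet.sHom A B) _⦋0⦌ :=
  CartesianMonoidalCategory.snd (SSet.stdSimplex.obj (SimplexCategory.mk 0)) A ≫ f

/-- Two maps of simplicial sets `f g : A ⟶ B` have the same class in
`τ₀(B^A)` if the corresponding vertices of the internal hom `B^A` are
isomorphic objects of its fundamental category. -/
noncomputable def SSet.THomotopic {A B : SSet.{u}} (f g : A ⟶ B) : Prop :=
  Nonempty (SSet.tauObj (SSet.sHom A B) (SSet.vertexOf f) ≅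
    SSet.tauObj (SSet.sHom A B) (SSet.vertexOf g))

/-- A map of simplicial sets is a *categorical equivalence* if its image in the
category `sSet^{τ₀}` is an isomorphism: it admits an inverse up to
`τ₀`-equivalence. -/
noncomputable def SSet.CatEquiv {A B : SSet.{u}} (u : A ⟶ B) : Prop :=
  ∃ v : B ⟶ A, SSet.THomotopic (u ≫ v) (𝟙 A) ∧ SSet.THomotopic (v ≫ u) (𝟙 B)

open MonoidalCategory in
/-- Precomposition with `u : A ⟶ B` as a map of internal homs `X^B ⟶ X^A`. -/
noncomputable def SSet.precompHom {A B : SSet.{u}} (u : A ⟶ B) (X : SSet.{u}) :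
    SSet.sHom B X ⟶ SSet.sHom A X where
  app n := TypeCat.ofHom (fun g => (SSet.stdSimplex.obj n.unop ◁ u) ≫ g)
  naturality n m f := by
    apply ConcreteCategory.hom_ext; intro g
    change (SSet.stdSimplex.obj m.unop ◁ u) ≫ (SSet.stdSimplex.map f.unop ▷ B) ≫ g =
      (SSet.stdSimplex.map f.unop ▷ A) ≫ (SSet.stdSimplex.obj n.unop ◁ u) ≫ g
    exact whisker_exchange_assoc _ _ _

/-- A map `u : A ⟶ B` of simplicial sets is a *weak categorical equivalence* if
for every simplicial set `X` the induced map
`sSet^{τ₀}(B, X) = τ₀(X^B) ⟶ τ₀(X^A) = sSet^{τ₀}(A, X)` is a bijection. -/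
noncomputable def SSet.WeakCatEquiv {A B : SSet.{u}} (u : A ⟶ B) : Prop :=
  ∀ X : SSet.{u}, Function.Bijective (SSet.tau0Map (SSet.precompHom u X))

open CategoryTheory Simplicial SSet MonoidalCategory Opposite CartesianMonoidalCategory

namespace CatWeakAux

instance (m : SimplexCategoryᵒᵖ) : Subsingleton ((Δ[0] : SSet.{u}).obj m) :=
  SSet.stdSimplex.objEquiv.subsingleton

/-- The unique map to the point. -/
noncomputable def toPt (Y : SSet.{u}) : Y ⟶ Δ[0] where
  app n := TypeCat.ofHom (fun _ => SSet.stdSimplex.objEquiv.symm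
    (SimplexCategory.Hom.mk (OrderHom.const _ 0)))
  naturality _ _ _ := ConcreteCategory.hom_ext _ _ fun _ => Subsingleton.elim _ _

lemma hom_pt_ext {Y : SSet.{u}} (a b : Y ⟶ Δ[0]) : a = b :=
  SSet.hom_ext fun _ => ConcreteCategory.hom_ext _ _ fun _ => Subsingleton.elim _ _

/-- Insert a simplicial set into `Δ[0] ⊗` itself. -/
noncomputable def ins (Y : SSet.{u}) : Y ⟶ Δ[0] ⊗ Y :=
  CartesianMonoidalCategory.lift (toPt Y) (𝟙 Y)

/-- The map `B ⟶ X` determined by a vertex of `X^B`. -/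
noncomputable def vertToHom {B X : SSet.{u}} (h : (SSet.sHom B X) _⦋0⦌) : B ⟶ X :=
  ins B ≫ h

/-- Postcomposition as a map of internal homs. -/
noncomputable def postComp {A S T : SSet.{u}} (k : S ⟶ T) :
    SSet.sHom A S ⟶ SSet.sHom A T where
  app n := TypeCat.ofHom (fun g => g ≫ k)
  naturality n m f := by apply ConcreteCategory.hom_ext; intro g; exact Category.assoc (SSet.stdSimplex.map f.unop ▷ A) g k

lemma postComp_vert {A S T : SSet.{u}} (k : S ⟶ T) (g : A ⟶ S) :
    (postComp (A := A) k).app (op (SimplexCategory.mk 0)) (SSet.vertexOf g)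
      = SSet.vertexOf (g ≫ k) := by
  dsimp [postComp, SSet.vertexOf]; exact Category.assoc (CartesianMonoidalCategory.snd Δ[0] A) g k

lemma precomp_vertexOf {A B X : SSet.{u}} (f : A ⟶ B) (w : B ⟶ X) :
    (SSet.precompHom f X).app (op (SimplexCategory.mk 0)) (SSet.vertexOf w)
      = SSet.vertexOf (f ≫ w) := by
  dsimp [SSet.precompHom, SSet.vertexOf]
  exact (CartesianMonoidalCategory.whiskerLeft_snd_assoc _ f w).trans (Category.assoc _ _ _).symm

lemma precomp_vert_eq {A B X : SSet.{u}} (f : A ⟶ B) (h : (SSet.sHom B X) _⦋0⦌) :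
    (SSet.precompHom f X).app (op (SimplexCategory.mk 0)) h
      = (postComp (vertToHom h)).app (op (SimplexCategory.mk 0)) (SSet.vertexOf f) := by
  dsimp [SSet.precompHom, postComp, SSet.vertexOf, vertToHom, ins]
  show (Δ[0] ◁ f) ≫ h = (CartesianMonoidalCategory.snd Δ[0] A ≫ f) ≫
    CartesianMonoidalCategory.lift (toPt B) (𝟙 B) ≫ h
  refine (congrArg (fun x => x ≫ h) ?_).trans (Category.assoc _ _ _)
  apply CartesianMonoidalCategory.hom_ext
  · exact hom_pt_ext _ _
  · simp

lemma tauObj_as {S : SSet.{u}} (v : S _⦋0⦌) : (SSet.tauObj S v).as = v := rfl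

lemma mapFund_obj {S T : SSet.{u}} (h : S ⟶ T) (c : SSet.FundCat S) :
    (SSet.mapFund h).obj c
      = SSet.tauObj T (h.app (op (SimplexCategory.mk 0)) c.as) := rfl

lemma tau0Map_mk {S T : SSet.{u}} (h : S ⟶ T) (c : SSet.FundCat S) :
    SSet.tau0Map h (Quotient.mk _ c) = Quotient.mk _ ((SSet.mapFund h).obj c) := rfl

lemma thomotopic_iff {A B : SSet.{u}} (f g : A ⟶ B) :
    SSet.THomotopic f g ↔
      (Quotient.mk _ (SSet.tauObj (SSet.sHom A B) (SSet.vertexOf f)) : SSet.tau0 _)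
        = Quotient.mk _ (SSet.tauObj (SSet.sHom A B) (SSet.vertexOf g)) := by
  constructor
  · exact fun ⟨i⟩ => Quotient.sound ⟨i⟩
  · exact fun h => Quotient.exact h

lemma thom_postcomp {A S T : SSet.{u}} {g₁ g₂ : A ⟶ S} (k : S ⟶ T)
    (h : SSet.THomotopic g₁ g₂) : SSet.THomotopic (g₁ ≫ k) (g₂ ≫ k) := by
  obtain ⟨i⟩ := h
  refine ⟨eqToIso ?_ ≪≫ (SSet.mapFund (postComp k)).mapIso i ≪≫ eqToIso ?_⟩
  · rw [mapFund_obj]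
    exact congrArg _ (postComp_vert k g₁).symm
  · rw [mapFund_obj]
    exact congrArg _ (postComp_vert k g₂)

lemma tau0Map_precomp_congr {A B : SSet.{u}} {f g : A ⟶ B}
    (hfg : SSet.THomotopic f g) (X : SSet.{u}) :
    SSet.tau0Map (SSet.precompHom f X) = SSet.tau0Map (SSet.precompHom g X) := by
  obtain ⟨i⟩ := hfg
  funext x
  obtain ⟨c, rfl⟩ := Quotient.exists_rep x
  rw [tau0Map_mk, tau0Map_mk, mapFund_obj, mapFund_obj,
    precomp_vert_eq f c.as, precomp_vert_eq g c.as]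
  refine Quotient.sound ⟨eqToIso ?_ ≪≫ (SSet.mapFund (postComp (vertToHom c.as))).mapIso i
    ≪≫ eqToIso ?_⟩
  · rw [mapFund_obj, tauObj_as]
  · rw [mapFund_obj, tauObj_as]

lemma tau0Map_comp {S T U : SSet.{u}} (h : S ⟶ T) (k : T ⟶ U) (x : SSet.tau0 S) :
    SSet.tau0Map (h ≫ k) x = SSet.tau0Map k (SSet.tau0Map h x) := by
  obtain ⟨c, rfl⟩ := Quotient.exists_rep x
  rfl

lemma tau0Map_id (S : SSet.{u}) (x : SSet.tau0 S) : SSet.tau0Map (𝟙 S) x = x := by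
  obtain ⟨c, rfl⟩ := Quotient.exists_rep x
  rfl

lemma precompHom_id (A X : SSet.{u}) :
    SSet.precompHom (𝟙 A) X = 𝟙 (SSet.sHom A X) := by
  apply SSet.hom_ext; intro n; apply ConcreteCategory.hom_ext; intro g
  show (SSet.stdSimplex.obj n.unop ◁ 𝟙 A) ≫ g = g
  rw [MonoidalCategory.whiskerLeft_id]; exact Category.id_comp _

lemma precompHom_comp {A B C : SSet.{u}} (u : A ⟶ B) (v : B ⟶ C) (X : SSet.{u}) :
    SSet.precompHom (u ≫ v) X = SSet.precompHom v X ≫ SSet.precompHom u X := by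
  apply SSet.hom_ext; intro n; apply ConcreteCategory.hom_ext; intro g
  show (SSet.stdSimplex.obj n.unop ◁ (u ≫ v)) ≫ g
    = (SSet.stdSimplex.obj n.unop ◁ u) ≫ (SSet.stdSimplex.obj n.unop ◁ v) ≫ g
  rw [MonoidalCategory.whiskerLeft_comp]; exact Category.assoc _ _ _

lemma catEquiv_weak {A B : SSet.{u}} (f : A ⟶ B) (h : SSet.CatEquiv f) :
    SSet.WeakCatEquiv f := by
  obtain ⟨v, h1, h2⟩ := h
  intro X
  refine Function.bijective_iff_has_inverse.mpr
    ⟨SSet.tau0Map (SSet.precompHom v X), fun x => ?_, fun x => ?_⟩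
  · rw [← tau0Map_comp, ← precompHom_comp, tau0Map_precomp_congr h2 X,
      precompHom_id, tau0Map_id]
  · rw [← tau0Map_comp, ← precompHom_comp, tau0Map_precomp_congr h1 X,
      precompHom_id, tau0Map_id]

lemma weak_catEquiv {A B : SSet.{u}} (f : A ⟶ B) (h : SSet.WeakCatEquiv f) :
    SSet.CatEquiv f := by
  obtain ⟨x, hx⟩ := (h A).2
    (Quotient.mk _ (SSet.tauObj (SSet.sHom A A) (SSet.vertexOf (𝟙 A))))
  obtain ⟨c, rfl⟩ := Quotient.exists_rep x
  set v : B ⟶ A := vertToHom c.as with hv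
  have h1 : SSet.THomotopic (f ≫ v) (𝟙 A) := by
    rw [thomotopic_iff]
    rw [tau0Map_mk, mapFund_obj, precomp_vert_eq f c.as, postComp_vert] at hx
    exact hx
  refine ⟨v, h1, ?_⟩
  have h3 : SSet.THomotopic ((f ≫ v) ≫ f) (𝟙 A ≫ f) := thom_postcomp f h1
  rw [Category.assoc, Category.id_comp] at h3
  -- now use injectivity at X = B
  have := (h B).1 (a₁ := Quotient.mk _ (SSet.tauObj (SSet.sHom B B) (SSet.vertexOf (v ≫ f))))
    (a₂ := Quotient.mk _ (SSet.tauObj (SSet.sHom B B) (SSet.vertexOf (𝟙 B)))) ?_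
  · rw [thomotopic_iff]; exact this
  · rw [tau0Map_mk, tau0Map_mk, mapFund_obj, mapFund_obj, tauObj_as, tauObj_as,
      precomp_vertexOf f (v ≫ f), precomp_vertexOf f (𝟙 B), Category.comp_id]
    exact (thomotopic_iff _ _).mp h3

end CatWeakAux

/-- For a map `f : A ⟶ B` between quasi-categories, `f` is a categorical
equivalence if and only if it is a weak categorical equivalence; and any
categorical equivalence between arbitrary simplicial sets is a weak categorical
equivalence. -/
theorem catEquiv_iff_weakCatEquiv
    (A B : SSet.{u}) [Quasicategory A] [Quasicategory B] (f : A ⟶ B) :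
    (SSet.CatEquiv f ↔ SSet.WeakCatEquiv f) ∧
    (∀ (A' B' : SSet.{u}) (g : A' ⟶ B'), SSet.CatEquiv g → SSet.WeakCatEquiv g) := by
  exact ⟨⟨CatWeakAux.catEquiv_weak f, CatWeakAux.weak_catEquiv f⟩,
    fun A' B' g => CatWeakAux.catEquiv_weak g⟩
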